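/- Let X_r (for an integer r > 0 and n ≥ 2) be the CW complex with 0-cells 0, 1, …, r; 1-cells P from 0 to 1, P_i and M_i from 2i−1 to 2i for 1 ≤ i ≤ ⌊r/2⌋, and P_{i,0}, …, P_{i,n−1} from 2i to 2i+1 for 1 ≤ i ≤ ⌊(r−1)/2⌋; 2-cells Ñ_0 with ∂Ñ_0 = P_1 − M_1, N_{i,j} with ∂N_{i,j} = P_i + P_{i,j} − P_{i,j+1} − M_i and Ñ_{i,j} with ∂Ñ_{i,j} = P_{i,j} + P_{i+1} − M_{i+1} − P_{i,j+1} for 1 ≤ i ≤ ⌊(r−1)/2⌋ and 0 ≤ j ≤ n−2; and 3-cells Q_{i,j} with ∂Q_{i,j} = N_{i,j} + Ñ_{i,j+1} − Ñ_{i,j} − N_{i,j+1} for 0 ≤ j ≤ n−3. Then X_r is contractible. In particular, its cellular chain complex over ℤ has the homology of a point. -/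

import Mathlib

/-!
STATEMENT 13: the CW complex `X_r` associated to the partial sock flow
category `S̃ⁿ_r` (for integers `r > 0`, `n ≥ 2`) is contractible.  Following the
given reduction, we formalize this at the chain level: the cellular chain
complex over `ℤ`, with cells and boundary maps exactly as listed, has the
homology of a point.

Cells (writing `m₁ = ⌊r/2⌋`, `m₂ = ⌊(r-1)/2⌋`, and `m₃ = ⌊r/2⌋ - 1` for the
range of indices `i` for which the cells `Ñ_{i,j}` and `Q_{i,j}`, whose
boundaries involve `P_{i+1}`, `M_{i+1}`, exist):
* 0-cells `0, 1, …, r`;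
* 1-cells `P` (from 0 to 1), `P_i, M_i` (from `2i−1` to `2i`, `1 ≤ i ≤ m₁`),
  `P_{i,0}, …, P_{i,n−1}` (from `2i` to `2i+1`, `1 ≤ i ≤ m₂`);
* 2-cells `Ñ_0` with `∂Ñ_0 = P_1 − M_1`; `N_{i,j}` (`1 ≤ i ≤ m₂`,
  `0 ≤ j ≤ n−2`) with `∂N_{i,j} = P_i + P_{i,j} − P_{i,j+1} − M_i`; and
  `Ñ_{i,j}` with `∂Ñ_{i,j} = P_{i,j} + P_{i+1} − M_{i+1} − P_{i,j+1}`;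
* 3-cells `Q_{i,j}` (`0 ≤ j ≤ n−3`) with
  `∂Q_{i,j} = N_{i,j} + Ñ_{i,j+1} − Ñ_{i,j} − N_{i,j+1}`.
-/

/-- 0-cells. -/
abbrev SockC0 (r : ℕ) := Fin (r + 1)

/-- 1-cells: `P`, then `P_i`/`M_i` (`Bool`: `true` = `P`), then `P_{i,j}`. -/
abbrev SockC1 (r n : ℕ) := Unit ⊕ ((Fin (r / 2) × Bool) ⊕ (Fin ((r - 1) / 2) × Fin n))

/-- 2-cells: `Ñ_0`, then `N_{i,j}`, then `Ñ_{i,j}`. -/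
abbrev SockC2 (r n : ℕ) :=
  PLift (1 ≤ r / 2) ⊕ ((Fin ((r - 1) / 2) × Fin (n - 1)) ⊕ (Fin (r / 2 - 1) × Fin (n - 1)))

/-- 3-cells: `Q_{i,j}`. -/
abbrev SockC3 (r n : ℕ) := Fin (r / 2 - 1) × Fin (n - 2)

/-- Boundary of the 1-cells. -/
noncomputable def sockD1 (r n : ℕ) (hr : 1 ≤ r) : SockC1 r n → (SockC0 r →₀ ℤ) := fun c =>
  match c with
  | .inl _ => Finsupp.single ⟨1, by omega⟩ 1 - Finsupp.single ⟨0, by omega⟩ 1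
  | .inr (.inl (i, _)) =>
      Finsupp.single ⟨2 * i.val + 2, by have := i.isLt; omega⟩ 1 -
        Finsupp.single ⟨2 * i.val + 1, by have := i.isLt; omega⟩ 1
  | .inr (.inr (i, _)) =>
      Finsupp.single ⟨2 * i.val + 3, by have := i.isLt; omega⟩ 1 -
        Finsupp.single ⟨2 * i.val + 2, by have := i.isLt; omega⟩ 1

/-- Boundary of the 2-cells. -/
noncomputable def sockD2 (r n : ℕ) (hn : 2 ≤ n) : SockC2 r n → (SockC1 r n →₀ ℤ) := fun c =>
  match c with
  | .inl h =>
      Finsupp.single (.inr (.inl (⟨0, h.down⟩, true))) 1 -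
        Finsupp.single (.inr (.inl (⟨0, h.down⟩, false))) 1
  | .inr (.inl (i, j)) =>  -- N_{i,j}
      Finsupp.single (.inr (.inl (⟨i.val, by have := i.isLt; omega⟩, true))) 1 +
        Finsupp.single (.inr (.inr (i, ⟨j.val, by have := j.isLt; omega⟩))) 1 -
        Finsupp.single (.inr (.inr (i, ⟨j.val + 1, by have := j.isLt; omega⟩))) 1 -
        Finsupp.single (.inr (.inl (⟨i.val, by have := i.isLt; omega⟩, false))) 1
  | .inr (.inr (i, j)) =>  -- Ñ_{i,j}
      Finsupp.single (.inr (.inr (⟨i.val, by have := i.isLt; omega⟩,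
          ⟨j.val, by have := j.isLt; omega⟩))) 1 +
        Finsupp.single (.inr (.inl (⟨i.val + 1, by have := i.isLt; omega⟩, true))) 1 -
        Finsupp.single (.inr (.inl (⟨i.val + 1, by have := i.isLt; omega⟩, false))) 1 -
        Finsupp.single (.inr (.inr (⟨i.val, by have := i.isLt; omega⟩,
          ⟨j.val + 1, by have := j.isLt; omega⟩))) 1

/-- Boundary of the 3-cells. -/
noncomputable def sockD3 (r n : ℕ) (hn : 2 ≤ n) : SockC3 r n → (SockC2 r n →₀ ℤ) := fun c =>
  match c with
  | (i, j) =>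
      Finsupp.single (.inr (.inl (⟨i.val, by have := i.isLt; omega⟩,
          ⟨j.val, by have := j.isLt; omega⟩))) 1 +
        Finsupp.single (.inr (.inr (i, ⟨j.val + 1, by have := j.isLt; omega⟩))) 1 -
        Finsupp.single (.inr (.inr (i, ⟨j.val, by have := j.isLt; omega⟩))) 1 -
        Finsupp.single (.inr (.inl (⟨i.val, by have := i.isLt; omega⟩,
          ⟨j.val + 1, by have := j.isLt; omega⟩))) 1

namespace SockAux

open Finsupp

variable (r n : ℕ)

noncomputable def edgeAt (k : ℕ) : SockC1 r n →₀ ℤ :=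
  match k with
  | 0 => single (.inl ()) 1
  | k + 1 =>
    if k % 2 = 0 then
      if h : k / 2 < r / 2 then single (.inr (.inl (⟨k / 2, h⟩, true))) 1 else 0
    else
      if h : k / 2 < (r - 1) / 2 ∧ 0 < n then
        single (.inr (.inr (⟨k / 2, h.1⟩, ⟨0, h.2⟩))) 1
      else 0

noncomputable def s0aux : ℕ → (SockC1 r n →₀ ℤ)
  | 0 => 0
  | k + 1 => s0aux k + edgeAt r n k

noncomputable def mAux : ℕ → (SockC2 r n →₀ ℤ)
  | 0 => if h : 1 ≤ r / 2 then -single (.inl ⟨h⟩) 1 else 0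
  | i + 1 =>
    mAux i +
      (if h : i + 1 < r / 2 ∧ 2 ≤ n then
        single (.inr (.inl (⟨i, by omega⟩, ⟨0, by omega⟩))) 1 -
          single (.inr (.inr (⟨i, by omega⟩, ⟨0, by omega⟩))) 1
      else 0)

noncomputable def nSum (i : Fin ((r - 1) / 2)) : ℕ → (SockC2 r n →₀ ℤ)
  | 0 => 0
  | j + 1 =>
    nSum i j + (if h : j + 1 < n then single (.inr (.inl (i, ⟨j, by omega⟩))) 1 else 0)

noncomputable def s1fun : SockC1 r n → (SockC2 r n →₀ ℤ) := fun c =>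
  match c with
  | .inl _ => 0
  | .inr (.inl (_, true)) => 0
  | .inr (.inl (i, false)) => mAux r n i.val
  | .inr (.inr (i, j)) => -(nSum r n i j.val) - (j.val : ℤ) • mAux r n i.val

noncomputable def qSum (i : Fin (r / 2 - 1)) : ℕ → (SockC3 r n →₀ ℤ)
  | 0 => 0
  | j + 1 => qSum i j + (if h : j < n - 2 then single (i, ⟨j, h⟩) 1 else 0)

noncomputable def s2fun : SockC2 r n → (SockC3 r n →₀ ℤ) := fun c =>
  match c with
  | .inl _ => 0
  | .inr (.inl _) => 0
  | .inr (.inr (i, j)) => qSum r n i j.val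

end SockAux
namespace SockAux

variable {r n : ℕ}

lemma fmk {m : ℕ} {a b : ℕ} (ha : a < m) (hb : b < m) (h : a = b) :
    (⟨a, ha⟩ : Fin m) = ⟨b, hb⟩ := Fin.ext h

lemma edgeAt_spec (hr : 1 ≤ r) (hn : 2 ≤ n) (k : ℕ) (hk : k < r) :
    Finsupp.linearCombination ℤ (sockD1 r n hr) (edgeAt r n k) =
      Finsupp.single ⟨k + 1, by omega⟩ 1 - Finsupp.single ⟨k, by omega⟩ 1 := by
  match k with
  | 0 => simp [edgeAt, sockD1]
  | k + 1 =>
    rcases Nat.even_or_odd k with he | ho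
    · have h2 : k % 2 = 0 := Nat.even_iff.mp he
      have h3 : k / 2 < r / 2 := by omega
      simp only [edgeAt, h2, if_pos, dif_pos h3, Finsupp.linearCombination_single, one_smul,
        sockD1]
      rw [fmk _ _ (by omega : 2 * (k / 2) + 2 = k + 2),
        fmk _ _ (by omega : 2 * (k / 2) + 1 = k + 1)]
    · have h2' : k % 2 = 1 := Nat.odd_iff.mp ho
      have h2 : ¬ (k % 2 = 0) := by omega
      have h3 : k / 2 < (r - 1) / 2 ∧ 0 < n := by omega
      simp only [edgeAt, h2, if_false, dif_pos h3, Finsupp.linearCombination_single, one_smul,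
        sockD1]
      rw [fmk _ _ (by omega : 2 * (k / 2) + 3 = k + 2),
        fmk _ _ (by omega : 2 * (k / 2) + 2 = k + 1)]

lemma s0aux_spec (hr : 1 ≤ r) (hn : 2 ≤ n) (k : ℕ) (hk : k ≤ r) :
    Finsupp.linearCombination ℤ (sockD1 r n hr) (s0aux r n k) =
      Finsupp.single ⟨k, by omega⟩ 1 - Finsupp.single ⟨0, by omega⟩ 1 := by
  induction k with
  | zero => simp [s0aux]
  | succ k ih =>
    rw [s0aux, map_add, ih (by omega), edgeAt_spec hr hn k (by omega)]
    abel

end SockAux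
namespace SockAux

variable {r n : ℕ}

lemma mAux_spec (hr : 1 ≤ r) (hn : 2 ≤ n) (i : ℕ) (hi : i < r / 2) :
    Finsupp.linearCombination ℤ (sockD2 r n hn) (mAux r n i) =
      Finsupp.single (.inr (.inl (⟨i, hi⟩, false))) 1 -
        Finsupp.single (.inr (.inl (⟨i, hi⟩, true))) 1 := by
  induction i with
  | zero =>
    rw [mAux, dif_pos (by omega : 1 ≤ r / 2)]
    simp only [map_neg, Finsupp.linearCombination_single, one_smul, sockD2]
    abel
  | succ i ih =>
    rw [mAux, dif_pos (⟨hi, hn⟩ : i + 1 < r / 2 ∧ 2 ≤ n), map_add, ih (by omega),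
      map_sub, Finsupp.linearCombination_single, Finsupp.linearCombination_single,
      one_smul, one_smul]
    simp only [sockD2]
    abel

end SockAux
namespace SockAux

variable {r n : ℕ}

lemma nSum_spec (hn : 2 ≤ n) (i : Fin ((r - 1) / 2)) (j : ℕ) (hj : j ≤ n - 1) :
    Finsupp.linearCombination ℤ (sockD2 r n hn) (nSum r n i j) =
      (j : ℤ) • (Finsupp.single (.inr (.inl (⟨i.val, by have := i.isLt; omega⟩, true))) 1 -
          Finsupp.single (.inr (.inl (⟨i.val, by have := i.isLt; omega⟩, false))) 1) +
        Finsupp.single (.inr (.inr (i, ⟨0, by omega⟩))) 1 -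
        Finsupp.single (.inr (.inr (i, ⟨j, by omega⟩))) 1 := by
  induction j with
  | zero => simp [nSum]
  | succ j ih =>
    rw [nSum, dif_pos (by omega : j + 1 < n), map_add, ih (by omega),
      Finsupp.linearCombination_single, one_smul]
    simp only [sockD2]
    push_cast
    rw [add_smul, one_smul]
    abel

end SockAux
namespace SockAux

variable {r n : ℕ}

lemma qSum_spec (hn : 2 ≤ n) (i : Fin (r / 2 - 1)) (j : ℕ) (hj : j ≤ n - 2) :
    Finsupp.linearCombination ℤ (sockD3 r n hn) (qSum r n i j) =
      Finsupp.single (.inr (.inl (⟨i.val, by have := i.isLt; omega⟩, ⟨0, by omega⟩))) 1 -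
        Finsupp.single (.inr (.inl (⟨i.val, by have := i.isLt; omega⟩, ⟨j, by omega⟩))) 1 +
        Finsupp.single (.inr (.inr (i, ⟨j, by omega⟩))) 1 -
        Finsupp.single (.inr (.inr (i, ⟨0, by omega⟩))) 1 := by
  induction j with
  | zero => simp [qSum]
  | succ j ih =>
    rw [qSum, dif_pos (by omega : j < n - 2), map_add, ih (by omega),
      Finsupp.linearCombination_single, one_smul]
    simp only [sockD3]
    abel

end SockAux
namespace SockAux

open Finsupp

variable {r n : ℕ}

noncomputable def s0fun (r n : ℕ) : SockC0 r → (SockC1 r n →₀ ℤ) := fun v => s0aux r n v.val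

lemma edgeAt_odd (i : ℕ) (h : i < r / 2) :
    edgeAt r n (2 * i + 1) = Finsupp.single (.inr (.inl (⟨i, h⟩, true))) 1 := by
  have e1 : (2 * i) % 2 = 0 := by omega
  have e2 : (2 * i) / 2 = i := by omega
  simp only [edgeAt, e1, e2, if_true, reduceIte, dif_pos h]

lemma edgeAt_even (hn : 2 ≤ n) (i : ℕ) (h : i < (r - 1) / 2) :
    edgeAt r n (2 * i + 2) =
      Finsupp.single (.inr (.inr (⟨i, h⟩, ⟨0, by omega⟩))) 1 := by
  have e1 : (2 * i + 1) % 2 = 1 := by omega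
  have e2 : (2 * i + 1) / 2 = i := by omega
  have h3 : i < (r - 1) / 2 ∧ 0 < n := ⟨h, by omega⟩
  simp only [show 2 * i + 2 = (2 * i + 1) + 1 from rfl, edgeAt, e1, e2]
  rw [if_neg (by omega), dif_pos h3]

lemma h12_gen (hr : 1 ≤ r) (hn : 2 ≤ n) (c : SockC2 r n) :
    Finsupp.linearCombination ℤ (sockD1 r n hr) (sockD2 r n hn c) = 0 := by
  rcases c with h | ⟨i, j⟩ | ⟨i, j⟩ <;>
    simp only [sockD2, map_add, map_sub, Finsupp.linearCombination_single, one_smul,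
      sockD1] <;> abel

lemma h23_gen (hn : 2 ≤ n) (q : SockC3 r n) :
    Finsupp.linearCombination ℤ (sockD2 r n hn) (sockD3 r n hn q) = 0 := by
  rcases q with ⟨i, j⟩
  simp only [sockD3, map_add, map_sub, Finsupp.linearCombination_single, one_smul, sockD2]
  abel

lemma heps_gen (hr : 1 ≤ r) (e : SockC1 r n) :
    Finsupp.linearCombination ℤ (fun _ : SockC0 r => (1 : ℤ)) (sockD1 r n hr e) = 0 := by
  rcases e with _ | ⟨i, b⟩ | ⟨i, j⟩ <;>
    simp [sockD1]

lemma hC_gen (hr : 1 ≤ r) (hn : 2 ≤ n) (v : SockC0 r) :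
    Finsupp.linearCombination ℤ (sockD1 r n hr) (s0fun r n v) =
      Finsupp.single v 1 - Finsupp.single ⟨0, by omega⟩ 1 := by
  rw [s0fun, s0aux_spec hr hn v.val (by omega)]

lemma hD_gen (hr : 1 ≤ r) (hn : 2 ≤ n) (e : SockC1 r n) :
    Finsupp.linearCombination ℤ (sockD2 r n hn) (s1fun r n e) +
      Finsupp.linearCombination ℤ (s0fun r n) (sockD1 r n hr e) =
      Finsupp.single e 1 := by
  rcases e with u | ⟨i, b⟩ | ⟨i, j⟩
  · simp [s1fun, sockD1, s0fun, s0aux, edgeAt]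
  · have hs : s0aux r n (2 * i.val + 2) = s0aux r n (2 * i.val + 1) + edgeAt r n (2 * i.val + 1) :=
      rfl
    cases b
    · rw [s1fun, mAux_spec hr hn i.val i.isLt]
      simp only [sockD1, map_sub, Finsupp.linearCombination_single, one_smul, s0fun, hs,
        edgeAt_odd i.val i.isLt]
      abel
    · simp only [s1fun, map_zero, sockD1, map_sub, Finsupp.linearCombination_single, one_smul,
        s0fun, hs, edgeAt_odd i.val i.isLt]
      abel
  · have hs : s0aux r n (2 * i.val + 3) = s0aux r n (2 * i.val + 2) + edgeAt r n (2 * i.val + 2) :=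
      rfl
    rw [s1fun, map_sub, map_neg, map_smul, nSum_spec hn i j.val (by omega),
      mAux_spec hr hn i.val (by omega)]
    simp only [sockD1, map_sub, Finsupp.linearCombination_single, one_smul, s0fun, hs,
      edgeAt_even hn i.val i.isLt]
    rw [smul_sub, smul_sub]
    abel

end SockAux
namespace SockAux

open Finsupp

variable {r n : ℕ}

lemma hE_gen (hr : 1 ≤ r) (hn : 2 ≤ n) (c : SockC2 r n) :
    Finsupp.linearCombination ℤ (sockD3 r n hn) (s2fun r n c) +
      Finsupp.linearCombination ℤ (s1fun r n) (sockD2 r n hn c) =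
      Finsupp.single c 1 := by
  rcases c with h | ⟨i, j⟩ | ⟨i, j⟩
  · simp only [s2fun, map_zero, sockD2, map_sub, Finsupp.linearCombination_single, one_smul,
      s1fun, mAux, dif_pos h.down]
    abel
  · have hn1 : nSum r n i (j.val + 1) =
        nSum r n i j.val + Finsupp.single (.inr (.inl (i, ⟨j.val, by omega⟩))) 1 := by
      rw [nSum, dif_pos (by have := j.isLt; omega : j.val + 1 < n)]
    simp only [s2fun, map_zero, sockD2, map_add, map_sub, Finsupp.linearCombination_single,
      one_smul, s1fun, hn1]
    push_cast
    rw [add_smul, one_smul]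
    abel
  · have hm : mAux r n (i.val + 1) = mAux r n i.val +
        (Finsupp.single (.inr (.inl (⟨i.val, by have := i.isLt; omega⟩, ⟨0, by omega⟩))) 1 -
          Finsupp.single (.inr (.inr (⟨i.val, by have := i.isLt; omega⟩, ⟨0, by omega⟩))) 1) := by
      rw [mAux, dif_pos (⟨by have := i.isLt; omega, hn⟩ : i.val + 1 < r / 2 ∧ 2 ≤ n)]
    have hn1 : nSum r n ⟨i.val, by have := i.isLt; omega⟩ (j.val + 1) =
        nSum r n ⟨i.val, by have := i.isLt; omega⟩ j.val +
          Finsupp.single (.inr (.inl (⟨i.val, by have := i.isLt; omega⟩,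
            ⟨j.val, by omega⟩))) 1 := by
      rw [nSum, dif_pos (by have := j.isLt; omega : j.val + 1 < n)]
    rw [s2fun, qSum_spec hn i j.val (by have := j.isLt; omega)]
    simp only [sockD2, map_add, map_sub, Finsupp.linearCombination_single, one_smul, s1fun,
      hm, hn1]
    push_cast
    rw [add_smul, one_smul]
    abel

lemma hF_gen (hn : 2 ≤ n) (q : SockC3 r n) :
    Finsupp.linearCombination ℤ (s2fun r n) (sockD3 r n hn q) = Finsupp.single q 1 := by
  rcases q with ⟨i, j⟩
  have hq : qSum r n i (j.val + 1) =
      qSum r n i j.val + Finsupp.single (i, ⟨j.val, j.isLt⟩) 1 := by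
    rw [qSum, dif_pos j.isLt]
  simp only [sockD3, map_add, map_sub, Finsupp.linearCombination_single, one_smul, s2fun, hq]
  abel

end SockAux
namespace SockAux

open Finsupp

variable {r n : ℕ}

lemma h12_all (hr : 1 ≤ r) (hn : 2 ≤ n) (v : SockC2 r n →₀ ℤ) :
    Finsupp.linearCombination ℤ (sockD1 r n hr)
      (Finsupp.linearCombination ℤ (sockD2 r n hn) v) = 0 := by
  induction v using Finsupp.induction_linear with
  | zero => simp
  | add f g hf hg => rw [map_add, map_add, hf, hg, add_zero]
  | single a b =>
      rw [Finsupp.linearCombination_single, map_smul, h12_gen hr hn a, smul_zero]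

lemma h23_all (hr : 1 ≤ r) (hn : 2 ≤ n) (v : SockC3 r n →₀ ℤ) :
    Finsupp.linearCombination ℤ (sockD2 r n hn)
      (Finsupp.linearCombination ℤ (sockD3 r n hn) v) = 0 := by
  induction v using Finsupp.induction_linear with
  | zero => simp
  | add f g hf hg => rw [map_add, map_add, hf, hg, add_zero]
  | single a b =>
      rw [Finsupp.linearCombination_single, map_smul, h23_gen hn a, smul_zero]

lemma heps_all (hr : 1 ≤ r) (hn : 2 ≤ n) (v : SockC1 r n →₀ ℤ) :
    Finsupp.linearCombination ℤ (fun _ : SockC0 r => (1 : ℤ))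
      (Finsupp.linearCombination ℤ (sockD1 r n hr) v) = 0 := by
  induction v using Finsupp.induction_linear with
  | zero => simp
  | add f g hf hg => rw [map_add, map_add, hf, hg, add_zero]
  | single a b =>
      rw [Finsupp.linearCombination_single, map_smul, heps_gen hr a, smul_zero]

lemma hC_all (hr : 1 ≤ r) (hn : 2 ≤ n) (v : SockC0 r →₀ ℤ) :
    Finsupp.linearCombination ℤ (sockD1 r n hr)
      (Finsupp.linearCombination ℤ (s0fun r n) v) =
      v - (Finsupp.linearCombination ℤ (fun _ : SockC0 r => (1 : ℤ)) v) •
        Finsupp.single (⟨0, by omega⟩ : SockC0 r) 1 := by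
  induction v using Finsupp.induction_linear with
  | zero => simp
  | add f g hf hg =>
      rw [map_add, map_add, hf, hg, map_add, add_smul]; abel
  | single a b =>
      rw [Finsupp.linearCombination_single, map_smul, hC_gen hr hn a,
        Finsupp.linearCombination_single, smul_eq_mul, mul_one, smul_sub,
        Finsupp.smul_single', mul_one]

lemma hD_all (hr : 1 ≤ r) (hn : 2 ≤ n) (v : SockC1 r n →₀ ℤ) :
    Finsupp.linearCombination ℤ (sockD2 r n hn)
      (Finsupp.linearCombination ℤ (s1fun r n) v) +
      Finsupp.linearCombination ℤ (s0fun r n)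
        (Finsupp.linearCombination ℤ (sockD1 r n hr) v) = v := by
  induction v using Finsupp.induction_linear with
  | zero => simp
  | add f g hf hg =>
      rw [map_add, map_add, map_add, map_add, add_add_add_comm, hf, hg]
  | single a b =>
      rw [Finsupp.linearCombination_single, Finsupp.linearCombination_single, map_smul,
        map_smul, ← smul_add, hD_gen hr hn a, Finsupp.smul_single', mul_one]

lemma hE_all (hr : 1 ≤ r) (hn : 2 ≤ n) (v : SockC2 r n →₀ ℤ) :
    Finsupp.linearCombination ℤ (sockD3 r n hn)
      (Finsupp.linearCombination ℤ (s2fun r n) v) +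
      Finsupp.linearCombination ℤ (s1fun r n)
        (Finsupp.linearCombination ℤ (sockD2 r n hn) v) = v := by
  induction v using Finsupp.induction_linear with
  | zero => simp
  | add f g hf hg =>
      rw [map_add, map_add, map_add, map_add, add_add_add_comm, hf, hg]
  | single a b =>
      rw [Finsupp.linearCombination_single, Finsupp.linearCombination_single, map_smul,
        map_smul, ← smul_add, hE_gen hr hn a, Finsupp.smul_single', mul_one]

lemma hF_all (hn : 2 ≤ n) (v : SockC3 r n →₀ ℤ) :
    Finsupp.linearCombination ℤ (s2fun r n)
      (Finsupp.linearCombination ℤ (sockD3 r n hn) v) = v := by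
  induction v using Finsupp.induction_linear with
  | zero => simp
  | add f g hf hg => rw [map_add, map_add, hf, hg]
  | single a b =>
      rw [Finsupp.linearCombination_single, map_smul, hF_gen hn a,
        Finsupp.smul_single', mul_one]

end SockAux

/-- The cellular chain complex of `X_r` over `ℤ` has the homology of a point:
`H_0 ≅ ℤ` and `H_1 = H_2 = H_3 = 0` (the complex is concentrated in degrees
`≤ 3`, so this says `H_k = 0` for all `k > 0`). -/
theorem sock_complex_contractible (r n : ℕ) (hr : 1 ≤ r) (hn : 2 ≤ n) :
    (∀ v, Finsupp.linearCombination ℤ (sockD1 r n hr)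
        (Finsupp.linearCombination ℤ (sockD2 r n hn) v) = 0) ∧
    (∀ v, Finsupp.linearCombination ℤ (sockD2 r n hn)
        (Finsupp.linearCombination ℤ (sockD3 r n hn) v) = 0) ∧
    Nonempty (((SockC0 r →₀ ℤ) ⧸
        LinearMap.range (Finsupp.linearCombination ℤ (sockD1 r n hr))) ≃ₗ[ℤ] ℤ) ∧
    Subsingleton ((LinearMap.ker (Finsupp.linearCombination ℤ (sockD1 r n hr))) ⧸
        (LinearMap.range (Finsupp.linearCombination ℤ (sockD2 r n hn))).comap
          (LinearMap.ker (Finsupp.linearCombination ℤ (sockD1 r n hr))).subtype) ∧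
    Subsingleton ((LinearMap.ker (Finsupp.linearCombination ℤ (sockD2 r n hn))) ⧸
        (LinearMap.range (Finsupp.linearCombination ℤ (sockD3 r n hn))).comap
          (LinearMap.ker (Finsupp.linearCombination ℤ (sockD2 r n hn))).subtype) ∧
    Subsingleton (LinearMap.ker (Finsupp.linearCombination ℤ (sockD3 r n hn))) := by
  set D1 := Finsupp.linearCombination ℤ (sockD1 r n hr) with hD1
  set D2 := Finsupp.linearCombination ℤ (sockD2 r n hn) with hD2
  set D3 := Finsupp.linearCombination ℤ (sockD3 r n hn) with hD3
  set ε := Finsupp.linearCombination ℤ (fun _ : SockC0 r => (1 : ℤ)) with hε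
  refine ⟨fun v => SockAux.h12_all hr hn v, fun v => SockAux.h23_all hr hn v, ?_, ?_, ?_, ?_⟩
  · have hker : LinearMap.range D1 = LinearMap.ker ε := by
      apply le_antisymm
      · rintro x ⟨y, rfl⟩
        exact LinearMap.mem_ker.mpr (SockAux.heps_all hr hn y)
      · intro x hx
        refine ⟨Finsupp.linearCombination ℤ (SockAux.s0fun r n) x, ?_⟩
        rw [hD1, SockAux.hC_all hr hn x, LinearMap.mem_ker.mp hx, zero_smul, sub_zero]
    have hsurj : Function.Surjective ε := by
      intro c
      refine ⟨Finsupp.single ⟨0, by omega⟩ c, ?_⟩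
      rw [hε, Finsupp.linearCombination_single, smul_eq_mul, mul_one]
    exact ⟨(Submodule.quotEquivOfEq _ _ hker).trans (ε.quotKerEquivOfSurjective hsurj)⟩
  · rw [Submodule.Quotient.subsingleton_iff, eq_top_iff]
    rintro ⟨x, hx⟩ -
    refine Submodule.mem_comap.mpr ⟨Finsupp.linearCombination ℤ (SockAux.s1fun r n) x, ?_⟩
    have := SockAux.hD_all hr hn x
    rw [← hD1, ← hD2] at this
    rw [LinearMap.mem_ker.mp hx, map_zero, add_zero] at this
    exact this
  · rw [Submodule.Quotient.subsingleton_iff, eq_top_iff]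
    rintro ⟨x, hx⟩ -
    refine Submodule.mem_comap.mpr ⟨Finsupp.linearCombination ℤ (SockAux.s2fun r n) x, ?_⟩
    have := SockAux.hE_all hr hn x
    rw [← hD2, ← hD3] at this
    rw [LinearMap.mem_ker.mp hx, map_zero, add_zero] at this
    exact this
  · refine subsingleton_of_forall_eq 0 ?_
    rintro ⟨x, hx⟩
    ext1
    have := SockAux.hF_all (r := r) hn x
    rw [← hD3, LinearMap.mem_ker.mp hx, map_zero] at this
    exact this.symm
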